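/- Let n ≥ 2 and let P=(a,a') and Q=(b,b') be points of F₀(ℝⁿ,2). Then δ = 0 if and only if k is a negative scalar multiple of h, i.e., there exists c < 0 with k = c·h. -/

import Mathlib

open scoped RealInnerProductSpace

/-- For `P = (a,a')`, `Q = (b,b')` in `F₀(ℝⁿ,2)`, the minimal distance `δ` between the two
components of the linear path from `P` to `Q` is `0` iff `k = (b'-b)/2` is a negative scalar
multiple of `h = (a'-a)/2`. -/
theorem stmt1 {n : ℕ} (hn : 2 ≤ n) (a a' b b' : EuclideanSpace ℝ (Fin n))
    (hP : 2 ≤ ‖a - a'‖) (hQ : 2 ≤ ‖b - b'‖) :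
    sInf ((fun t : ℝ => ‖(t • b + (1 - t) • a) - (t • b' + (1 - t) • a')‖) '' Set.Icc 0 1) = 0
      ↔ ∃ c : ℝ, c < 0 ∧ (2:ℝ)⁻¹ • (b' - b) = c • ((2:ℝ)⁻¹ • (a' - a)) := by
  set f : ℝ → ℝ := fun t => ‖(t • b + (1 - t) • a) - (t • b' + (1 - t) • a')‖ with hf
  have hkey : ∀ t : ℝ, (t • b + (1 - t) • a) - (t • b' + (1 - t) • a')
      = t • (b - b') + (1 - t) • (a - a') := by
    intro t; module
  have hu : a - a' ≠ 0 := by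
    intro h; rw [h, norm_zero] at hP; linarith
  have hv : b - b' ≠ 0 := by
    intro h; rw [h, norm_zero] at hQ; linarith
  have hbdd : BddBelow (f '' Set.Icc 0 1) := by
    refine ⟨0, ?_⟩
    rintro y ⟨s, -, rfl⟩
    exact norm_nonneg _
  have hne : (f '' Set.Icc 0 1).Nonempty := ⟨f 0, 0, by norm_num, rfl⟩
  have hcont : ContinuousOn f (Set.Icc 0 1) := by
    apply Continuous.continuousOn
    fun_prop
  constructor
  · intro h0
    obtain ⟨t, ht, hmin⟩ := (isCompact_Icc).exists_isMinOn ⟨0, by norm_num⟩ hcont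
    have hinf : sInf (f '' Set.Icc 0 1) = f t := by
      refine le_antisymm (csInf_le hbdd ⟨t, ht, rfl⟩) (le_csInf hne ?_)
      rintro y ⟨s, hs, rfl⟩
      exact hmin hs
    have hft : f t = 0 := by rw [← hinf, h0]
    have heq : t • (b - b') + (1 - t) • (a - a') = 0 := by
      have := norm_eq_zero.mp hft
      rwa [hkey t] at this
    obtain ⟨ht0, ht1⟩ := ht
    have ht0' : t ≠ 0 := by
      rintro rfl
      simp at heq
      exact hu heq
    have ht1' : t ≠ 1 := by
      rintro rfl
      simp at heq
      exact hv heq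
    have htpos : 0 < t := lt_of_le_of_ne ht0 (Ne.symm ht0')
    have htlt : t < 1 := lt_of_le_of_ne ht1 ht1'
    refine ⟨(t - 1) / t, div_neg_of_neg_of_pos (by linarith) htpos, ?_⟩
    have hv' : b - b' = ((t - 1) / t) • (a - a') := by
      have h2 : t • (b - b') = (t - 1) • (a - a') := by
        rw [show (t - 1 : ℝ) = -(1 - t) by ring, neg_smul]
        linear_combination (norm := module) heq
      have := congrArg (fun x => t⁻¹ • x) h2
      simpa [smul_smul, inv_mul_cancel₀ ht0', div_eq_inv_mul, mul_comm] using this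
    have hv'' : b' - b = ((t - 1) / t) • (a' - a) := by
      rw [show b' - b = -(b - b') by abel, hv', show a' - a = -(a - a') by abel, smul_neg]
    rw [hv'', smul_comm]
  · rintro ⟨c, hc, heq⟩
    have hv' : b - b' = c • (a - a') := by
      have := congrArg (fun x => (2 : ℝ) • x) heq
      simp only [smul_smul] at this
      rw [show b - b' = -(b' - b) by abel, show a - a' = -(a' - a) by abel, smul_neg]
      norm_num at this
      rw [this, show (2*(c*(1/2)):ℝ) = c by ring]
    set t : ℝ := 1 / (1 - c) with htdef
    have h1c : (0 : ℝ) < 1 - c := by linarith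
    have htpos : 0 < t := by positivity
    have htlt : t ≤ 1 := by
      rw [htdef, div_le_one h1c]; linarith
    have hft : f t = 0 := by
      rw [hf]
      simp only
      rw [hkey t, hv', smul_smul, ← add_smul]
      have : t * c + (1 - t) = 0 := by
        rw [htdef]; field_simp; ring
      rw [this, zero_smul, norm_zero]
    refine le_antisymm (csInf_le hbdd ⟨t, ⟨htpos.le, htlt⟩, hft⟩) (le_csInf hne ?_)
    rintro y ⟨s, -, rfl⟩
    exact norm_nonneg _
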